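/- Let (X, X⁺) be a Banach lattice with lattice norm. Then for any comparable u, v ∈ X⁺ with ‖u‖ = ‖v‖ = 1, one has ‖u − v‖ ≤ e^{d(u,v)} − 1. -/

import Mathlib

open scoped Topology
open Filter

variable {X : Type*} [NormedAddCommGroup X] [Lattice X] [HasSolidNorm X] [IsOrderedAddMonoid X]
  [NormedSpace ℝ X] [PosSMulStrictMono ℝ X] [PosSMulReflectLT ℝ X]
  [CompleteSpace X]

/-- `m(u/v) = sup {α : α • v ≤ u}` in a Banach lattice. -/
noncomputable def mLat (u v : X) : ℝ := sSup {α : ℝ | α • v ≤ u}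

/-- `M(u/v) = inf {α : u ≤ α • v}` in a Banach lattice. -/
noncomputable def MLat (u v : X) : ℝ := sInf {α : ℝ | u ≤ α • v}

/-- The projective distance in a Banach lattice. -/
noncomputable def dLat (u v : X) : ℝ := Real.log (MLat u v / mLat u v)

/-- in a Banach lattice, `‖u - v‖ ≤ e^{d(u,v)} - 1` for comparable
unit vectors of the positive cone. -/
theorem norm_sub_le_exp_dLat {u v : X} (hu : 0 ≤ u) (hv : 0 ≤ v)
    (hu0 : u ≠ 0) (hv0 : v ≠ 0)
    (huv : ∃ α β : ℝ, 0 < α ∧ 0 < β ∧ α • v ≤ u ∧ u ≤ β • v)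
    (hnu : ‖u‖ = 1) (hnv : ‖v‖ = 1) :
    ‖u - v‖ ≤ Real.exp (dLat u v) - 1 := by
  obtain ⟨α, β, hα, hβ, hαv, hβv⟩ := huv
  have key : ∀ a b : ℝ, a • v ≤ u → u ≤ b • v → a ≤ b := by
    intro a b h1 h2
    by_contra h
    push_neg at h
    have h3 : (a - b) • v ≤ 0 := by
      rw [sub_smul, sub_nonpos]; exact h1.trans h2
    have h4 : 0 ≤ (a - b) • v := smul_nonneg (by linarith) hv
    rcases smul_eq_zero.1 (le_antisymm h3 h4) with h5 | h5
    · linarith [sub_eq_zero.1 h5]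
    · exact hv0 h5
  set S₁ : Set ℝ := {a : ℝ | a • v ≤ u} with hS₁
  set S₂ : Set ℝ := {a : ℝ | u ≤ a • v} with hS₂
  have hS₁c : IsClosed S₁ :=
    isClosed_le (continuous_id.smul continuous_const) continuous_const
  have hS₂c : IsClosed S₂ :=
    isClosed_le continuous_const (continuous_id.smul continuous_const)
  have hS₁ne : S₁.Nonempty := ⟨α, hαv⟩
  have hS₂ne : S₂.Nonempty := ⟨β, hβv⟩
  have hS₁bdd : BddAbove S₁ := ⟨β, fun a ha => key a β ha hβv⟩
  have hS₂bdd : BddBelow S₂ := ⟨α, fun b hb => key α b hαv hb⟩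
  set m := mLat u v with hm
  set M := MLat u v with hM
  have hmS : m ∈ S₁ := hS₁c.csSup_mem hS₁ne hS₁bdd
  have hMS : M ∈ S₂ := hS₂c.csInf_mem hS₂ne hS₂bdd
  have hmv : m • v ≤ u := hmS
  have hMv : u ≤ M • v := hMS
  have hαm : α ≤ m := le_csSup hS₁bdd hαv
  have hm0 : 0 < m := lt_of_lt_of_le hα hαm
  have hM0 : 0 < M := lt_of_lt_of_le hm0 (key m M hmv hMv)
  -- m ≤ 1
  have hm1 : m ≤ 1 := by
    have habs : |m • v| ≤ |u| := by
      rw [abs_of_nonneg (smul_nonneg hm0.le hv), abs_of_nonneg hu]; exact hmv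
    have := norm_le_norm_of_abs_le_abs habs
    rw [norm_smul, Real.norm_eq_abs, abs_of_nonneg hm0.le, hnu, hnv, mul_one] at this
    exact this
  -- 1 ≤ M
  have hM1 : 1 ≤ M := by
    have habs : |u| ≤ |M • v| := by
      rw [abs_of_nonneg (smul_nonneg hM0.le hv), abs_of_nonneg hu]; exact hMv
    have := norm_le_norm_of_abs_le_abs habs
    rw [norm_smul, Real.norm_eq_abs, abs_of_nonneg hM0.le, hnu, hnv, mul_one] at this
    exact this
  have hexp : Real.exp (dLat u v) = M / m := by
    rw [dLat]
    exact Real.exp_log (div_pos hM0 hm0)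
  rw [hexp]
  have hq : m * (M / m) = M := mul_div_cancel₀ _ hm0.ne'
  have hMc : M - 1 ≤ M / m - 1 := by nlinarith
  have hmc : 1 - m ≤ M / m - 1 := by nlinarith [sq_nonneg (1 - m)]
  set c : ℝ := M / m - 1 with hc
  have hc0 : 0 ≤ c := le_trans (by linarith) hMc
  have h1 : u - v ≤ c • v := by
    calc u - v ≤ M • v - (1 : ℝ) • v := by
          rw [one_smul]; exact sub_le_sub_right hMv v
    _ = (M - 1) • v := by rw [sub_smul]
    _ ≤ c • v := smul_le_smul_of_nonneg_right hMc hv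
  have h2 : v - u ≤ c • v := by
    calc v - u ≤ (1 : ℝ) • v - m • v := by
          rw [one_smul]; exact sub_le_sub_left hmv v
    _ = (1 - m) • v := by rw [sub_smul]
    _ ≤ c • v := smul_le_smul_of_nonneg_right hmc hv
  have habs : |u - v| ≤ |c • v| := by
    rw [abs_of_nonneg (smul_nonneg hc0 hv)]
    exact abs_le'.2 ⟨h1, by rw [neg_sub]; exact h2⟩
  have := norm_le_norm_of_abs_le_abs habs
  rw [norm_smul, Real.norm_eq_abs, abs_of_nonneg hc0, hnv, mul_one] at this
  linarith
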